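/- arXiv:1109.6076 — 2 statements merged into one kernel-verified Lean document; each statement's English description precedes it below -/
import Mathlib

section
/- For every positive integer N, setting t = 2^{2^N}, the point x_0 = 2 - 2^{2^N} satisfies φ_t^N(x_0) = 0, where φ_t(x) = (x+t)^2 - t. Consequently, for each N there exists an integer t such that the set of rational iterated preimages of 0 under φ_t has cardinality at least N. -/
lemma iter_formula (T : ℚ) : ∀ (k : ℕ) (x : ℚ),
    (fun y : ℚ => (y + T) ^ 2 - T)^[k] x = (x + T) ^ 2 ^ k - T := by
  intro k
  induction k with
  | zero => intro x; simp
  | succ k ih =>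
    intro x
    rw [Function.iterate_succ_apply, ih, sub_add_cancel, ← pow_mul, ← pow_succ']

/-- For every positive integer `N`, with `t = 2^(2^N)` the point `x₀ = 2 - 2^(2^N)`
satisfies `φ_t^N(x₀) = 0` where `φ_t(x) = (x+t)^2 - t`; consequently for each `N` there
is an integer `t` such that the set of rational iterated preimages of `0` under `φ_t`
has cardinality at least `N`. -/
theorem stmt_1 (N : ℕ) (hN : 0 < N) :
    ((fun y : ℚ => (y + 2 ^ 2 ^ N) ^ 2 - 2 ^ 2 ^ N)^[N] (2 - 2 ^ 2 ^ N) = 0) ∧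
    ∃ t : ℤ, ∃ S : Finset ℚ, N ≤ S.card ∧
      ∀ x ∈ S, ∃ M : ℕ, 1 ≤ M ∧ (fun y : ℚ => (y + (t : ℚ)) ^ 2 - t)^[M] x = 0 := by
  constructor
  · rw [iter_formula, sub_add_cancel, sub_self]
  · refine ⟨2 ^ 2 ^ N, (Finset.range N).image (fun j => (2:ℚ) ^ 2 ^ j - 2 ^ 2 ^ N), ?_, ?_⟩
    · rw [Finset.card_image_of_injOn, Finset.card_range]
      intro i _ j _ h
      have h2 : (2:ℚ) ^ 2 ^ i = 2 ^ 2 ^ j := by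
        have := sub_left_injective h
        simpa using this
      have h3 := pow_right_injective₀ (by norm_num : (0:ℚ) < 2) (by norm_num) h2
      exact Nat.pow_right_injective le_rfl h3
    · intro x hx
      simp only [Finset.mem_image, Finset.mem_range] at hx
      obtain ⟨j, hj, rfl⟩ := hx
      refine ⟨N - j, by omega, ?_⟩
      push_cast
      rw [iter_formula, sub_add_cancel, ← pow_mul]
      have : 2 ^ j * 2 ^ (N - j) = 2 ^ N := by
        rw [← pow_add]; congr 1; omega
      rw [this, sub_self]
end

section
/- Let K be a number field, S a finite set of places of K containing the archimedean places, and let φ(x) = (x^d + a_{d-1}x^{d-1} + ⋯ + a_1 x)/(b_{d-1}x^{d-1} + ⋯ + b_1 x + 1) with all a_i, b_i S-integers. If x_0 ∈ O_{K,S}^× is an S-unit and x_1 ∈ K satisfies x_1^d + a_{d-1}x_1^{d-1} + ⋯ + a_1 x_1 = (b_{d-1}x_1^{d-1} + ⋯ + b_1 x_1 + 1)·x_0, then x_1 is an S-unit. -/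
open IsDedekindDomain NumberField

/-- Let `K` be a number field and `S` a finite set of (finite) places of `K` (the
archimedean places are implicitly contained in `S` since we only track finite places).
Let `φ(x) = (x^d + a_{d-1}x^{d-1} + ⋯ + a_1 x)/(b_{d-1}x^{d-1} + ⋯ + b_1 x + 1)` with all
`a_i, b_i` `S`-integers.  If `x₀` is an `S`-unit and `x₁ ∈ K` satisfies
`x₁^d + ∑ a_i x₁^i = (∑ b_i x₁^i + 1) x₀`, then `x₁` is an `S`-unit. -/
theorem stmt_5 (K : Type*) [Field K] [NumberField K]
    (S : Finset (HeightOneSpectrum (𝓞 K))) (d : ℕ) (hd : 1 < d)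
    (a b : ℕ → K)
    (ha : ∀ i, 1 ≤ i → i ≤ d - 1 → ∀ v : HeightOneSpectrum (𝓞 K), v ∉ S →
      v.valuation K (a i) ≤ 1)
    (hb : ∀ i, 1 ≤ i → i ≤ d - 1 → ∀ v : HeightOneSpectrum (𝓞 K), v ∉ S →
      v.valuation K (b i) ≤ 1)
    (x₀ x₁ : K)
    (hx₀ : ∀ v : HeightOneSpectrum (𝓞 K), v ∉ S → v.valuation K x₀ = 1)
    (heq : x₁ ^ d + ∑ i ∈ Finset.Icc 1 (d - 1), a i * x₁ ^ i
      = (∑ i ∈ Finset.Icc 1 (d - 1), b i * x₁ ^ i + 1) * x₀) :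
    ∀ v : HeightOneSpectrum (𝓞 K), v ∉ S → v.valuation K x₁ = 1 := by
  intro v hv
  have hx₁ : x₁ ≠ 0 := by
    rintro rfl
    have h2 : ∀ i ∈ Finset.Icc 1 (d - 1), a i * (0 : K) ^ i = 0 := by
      intro i hi
      simp only [Finset.mem_Icc] at hi
      rw [zero_pow (by omega), mul_zero]
    have h3 : ∀ i ∈ Finset.Icc 1 (d - 1), b i * (0 : K) ^ i = 0 := by
      intro i hi
      simp only [Finset.mem_Icc] at hi
      rw [zero_pow (by omega), mul_zero]
    rw [zero_pow (by omega : d ≠ 0), Finset.sum_eq_zero h2, Finset.sum_eq_zero h3] at heq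
    have h0 : x₀ = 0 := by simpa using heq.symm
    have := hx₀ v hv
    rw [h0, Valuation.map_zero] at this
    exact zero_ne_one this
  set t := v.valuation K x₁ with ht
  have ht0 : t ≠ 0 := (Valuation.ne_zero_iff _).mpr hx₁
  have hval := congrArg (v.valuation K) heq
  rcases lt_trichotomy t 1 with h | h | h
  · exfalso
    -- valuation of LHS is < 1
    have hL : v.valuation K (x₁ ^ d + ∑ i ∈ Finset.Icc 1 (d - 1), a i * x₁ ^ i) < 1 := by
      refine lt_of_le_of_lt (le_trans ((v.valuation K).map_add _ _) (max_le ?_ ?_)) h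
      · rw [map_pow]
        calc t ^ d = t ^ (d - 1) * t := by rw [← pow_succ]; congr 1; omega
          _ ≤ 1 * t := mul_le_mul_left (pow_le_one' h.le _) t
          _ = t := one_mul t
      · apply Valuation.map_sum_le
        intro i hi
        simp only [Finset.mem_Icc] at hi
        rw [map_mul, map_pow]
        calc v.valuation K (a i) * t ^ i ≤ 1 * t ^ i :=
              mul_le_mul_left (ha i hi.1 hi.2 v hv) _
          _ = t ^ i := one_mul _
          _ = t ^ (i - 1) * t := by rw [← pow_succ]; congr 1; omega
          _ ≤ 1 * t := mul_le_mul_left (pow_le_one' h.le _) t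
          _ = t := one_mul t
    -- valuation of RHS is 1
    have hsum : v.valuation K (∑ i ∈ Finset.Icc 1 (d - 1), b i * x₁ ^ i) < 1 := by
      refine lt_of_le_of_lt ?_ h
      apply Valuation.map_sum_le
      intro i hi
      simp only [Finset.mem_Icc] at hi
      rw [map_mul, map_pow]
      calc v.valuation K (b i) * t ^ i ≤ 1 * t ^ i :=
            mul_le_mul_left (hb i hi.1 hi.2 v hv) _
        _ = t ^ i := one_mul _
        _ = t ^ (i - 1) * t := by rw [← pow_succ]; congr 1; omega
        _ ≤ 1 * t := mul_le_mul_left (pow_le_one' h.le _) t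
        _ = t := one_mul t
    have hR : v.valuation K ((∑ i ∈ Finset.Icc 1 (d - 1), b i * x₁ ^ i + 1) * x₀) = 1 := by
      rw [map_mul, hx₀ v hv, mul_one]
      have : v.valuation K (∑ i ∈ Finset.Icc 1 (d - 1), b i * x₁ ^ i) ≠
          v.valuation K (1 : K) := by
        rw [Valuation.map_one]; exact hsum.ne
      rw [Valuation.map_add_of_distinct_val _ this, Valuation.map_one,
        max_eq_right hsum.le]
    rw [hval, hR] at hL
    exact lt_irrefl _ hL
  · exact h
  · exfalso
    have hpow : t ^ (d - 1) < t ^ d := by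
      calc t ^ (d - 1) = t ^ (d - 1) * 1 := (mul_one _).symm
        _ < t ^ (d - 1) * t := by
            exact mul_lt_mul_of_pos_left h (zero_lt_iff.mpr (pow_ne_zero _ ht0))
        _ = t ^ d := by rw [← pow_succ]; congr 1; omega
    have hsa : v.valuation K (∑ i ∈ Finset.Icc 1 (d - 1), a i * x₁ ^ i) ≤ t ^ (d - 1) := by
      apply Valuation.map_sum_le
      intro i hi
      simp only [Finset.mem_Icc] at hi
      rw [map_mul, map_pow]
      calc v.valuation K (a i) * t ^ i ≤ 1 * t ^ i :=
            mul_le_mul_left (ha i hi.1 hi.2 v hv) _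
        _ = t ^ i := one_mul _
        _ ≤ t ^ (d - 1) := pow_le_pow_right' h.le hi.2
    have hL : v.valuation K (x₁ ^ d + ∑ i ∈ Finset.Icc 1 (d - 1), a i * x₁ ^ i) = t ^ d := by
      have hne : v.valuation K (x₁ ^ d) ≠
          v.valuation K (∑ i ∈ Finset.Icc 1 (d - 1), a i * x₁ ^ i) := by
        rw [map_pow]
        exact (lt_of_le_of_lt hsa hpow).ne'
      rw [Valuation.map_add_of_distinct_val _ hne, map_pow,
        max_eq_left (le_of_lt (lt_of_le_of_lt hsa hpow))]
    have hR : v.valuation K ((∑ i ∈ Finset.Icc 1 (d - 1), b i * x₁ ^ i + 1) * x₀)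
        ≤ t ^ (d - 1) := by
      rw [map_mul, hx₀ v hv, mul_one]
      refine le_trans ((v.valuation K).map_add _ _) (max_le ?_ ?_)
      · apply Valuation.map_sum_le
        intro i hi
        simp only [Finset.mem_Icc] at hi
        rw [map_mul, map_pow]
        calc v.valuation K (b i) * t ^ i ≤ 1 * t ^ i :=
              mul_le_mul_left (hb i hi.1 hi.2 v hv) _
          _ = t ^ i := one_mul _
          _ ≤ t ^ (d - 1) := pow_le_pow_right' h.le hi.2
      · rw [Valuation.map_one]
        exact one_le_pow_of_one_le' h.le _
    have hcon : t ^ d ≤ t ^ (d - 1) := by rw [← hL, hval]; exact hR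
    exact absurd hcon (not_le.mpr hpow)
end
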